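/- Let L be a finite nonempty set of linear functionals on ℝⁿ with ℓ ∈ L ↔ -ℓ ∈ L such that B := {x | ℓ(x) ≤ 1 for all ℓ ∈ L} is bounded, and let h(x) := max_{ℓ ∈ L} ℓ(x) be the associated polyhedral norm. Let f ∈ ℝ[x₁,…,xₙ], X := {x ∈ ℝⁿ | f(x) = 0}, and let v ∈ X with ∇f(v) ≠ 0. Suppose u ∈ ℝⁿ satisfies h(u - v) ≤ h(u - x) for all x ∈ X and λ := h(u - v) > 0, and let A := {ℓ ∈ L | ℓ(u - v) = λ} be the set of active functionals (those realizing the maximum). Then the gradient ∇f(v) lies in the linear span of the vectors representing the functionals in A; equivalently, the differential of f at v is a linear combination of the functionals ℓ ∈ A. (This is the first-order tangency condition asserting that the minimal face of the ball B_λ(u) through which it touches X at v is supported by the tangent space of X at v; it underlies the defining equations of the incidence varieties used to compute the medial axis.) -/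

import Mathlib

/-- The gradient of a multivariate polynomial `f` at a point `v`: the vector of
partial derivatives `pderiv i f` evaluated at `v`. -/
noncomputable def grad {n : ℕ} (f : MvPolynomial (Fin n) ℝ)
    (v : EuclideanSpace ℝ (Fin n)) : EuclideanSpace ℝ (Fin n) :=
  WithLp.toLp 2 (fun i => MvPolynomial.eval (fun j => v j) (MvPolynomial.pderiv i f))

/-- The vector in `ℝⁿ` representing a linear functional `ℓ` (via the standard
inner product). -/
noncomputable def vecOf {n : ℕ} (ℓ : EuclideanSpace ℝ (Fin n) →ₗ[ℝ] ℝ) :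
    EuclideanSpace ℝ (Fin n) :=
  WithLp.toLp 2 (fun i => ℓ (EuclideanSpace.single i 1))

open MvPolynomial Filter Asymptotics Topology

lemma hasStrictFDerivAt_eval_poly {n : ℕ} (f : MvPolynomial (Fin n) ℝ)
    (v : EuclideanSpace ℝ (Fin n)) :
    HasStrictFDerivAt (fun x : EuclideanSpace ℝ (Fin n) => MvPolynomial.eval (fun j => x j) f)
      (∑ i, MvPolynomial.eval (fun j => v j) (MvPolynomial.pderiv i f) •
        (EuclideanSpace.proj i : EuclideanSpace ℝ (Fin n) →L[ℝ] ℝ)) v := by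
  induction f using MvPolynomial.induction_on with
  | C a =>
      simp only [eval_C, pderiv_C, map_zero, zero_smul, Finset.sum_const_zero]
      exact hasStrictFDerivAt_const a v
  | add p q hp hq =>
      simp only [map_add, add_smul, Finset.sum_add_distrib]
      exact hp.add hq
  | mul_X p i hp =>
      have hcoord : HasStrictFDerivAt (fun x : EuclideanSpace ℝ (Fin n) => x i)
          (EuclideanSpace.proj i : EuclideanSpace ℝ (Fin n) →L[ℝ] ℝ) v :=
        (EuclideanSpace.proj i : EuclideanSpace ℝ (Fin n) →L[ℝ] ℝ).hasStrictFDerivAt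
      have := hp.mul hcoord
      simp only [eval_mul, eval_X] at this ⊢
      refine (this.congr_fderiv ?_).congr_of_eventuallyEq (Filter.EventuallyEq.refl _ _)
      symm
      ext d
      simp only [ContinuousLinearMap.sum_apply, ContinuousLinearMap.smul_apply,
        ContinuousLinearMap.add_apply, pderiv_mul, pderiv_X, map_add, map_mul, eval_X]
      simp only [Pi.single_apply, apply_ite (MvPolynomial.eval fun j => v j), map_one,
        map_zero, add_smul, mul_ite, mul_one, mul_zero, ite_smul, zero_smul,
        Finset.sum_add_distrib, Finset.sum_ite_eq Finset.univ i, Finset.mem_univ, if_true,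
        ContinuousLinearMap.smul_apply, smul_eq_mul, Finset.mul_sum]
      simp only [add_mul, ite_mul, zero_mul, Finset.sum_add_distrib, Finset.sum_ite_eq,
        Finset.mem_univ, if_true]
      rw [add_comm]
      congr 1
      exact Finset.sum_congr rfl fun j _ => by ring

lemma euclid_inner_eq {n : ℕ} (a x : EuclideanSpace ℝ (Fin n)) :
    (inner ℝ a x : ℝ) = ∑ i, a i * x i := by
  simp [PiLp.inner_apply, RCLike.inner_apply, conj_trivial]
  exact Finset.sum_congr rfl fun i _ => mul_comm _ _

lemma apply_eq_inner_vecOf {n : ℕ} (ℓ : EuclideanSpace ℝ (Fin n) →ₗ[ℝ] ℝ)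
    (x : EuclideanSpace ℝ (Fin n)) : ℓ x = (inner ℝ (vecOf ℓ) x : ℝ) := by
  have hx : x = ∑ i, x i • EuclideanSpace.single i 1 := by
    ext j
    rw [WithLp.ofLp_sum, Finset.sum_apply]
    simp [EuclideanSpace.single_apply]
  rw [euclid_inner_eq]
  conv_lhs => rw [hx]
  rw [map_sum]
  exact Finset.sum_congr rfl fun i _ => by
    rw [map_smul, smul_eq_mul, mul_comm]; rfl

set_option maxHeartbeats 1000000 in
/-- First-order tangency condition: if `u` lies in the Voronoi
cell of `v ∈ X = V(f)` with `∇f(v) ≠ 0` and `λ = h(u - v) > 0`, then `∇f(v)`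
lies in the span of the vectors representing the active functionals
`A = {ℓ ∈ L | ℓ(u - v) = λ}`. -/
theorem stmt_8 {n : ℕ} (hn : 1 ≤ n)
    (L : Finset (EuclideanSpace ℝ (Fin n) →ₗ[ℝ] ℝ)) (hL : L.Nonempty)
    (hsymm : ∀ ℓ, ℓ ∈ L ↔ -ℓ ∈ L)
    (hbdd : Bornology.IsBounded {x : EuclideanSpace ℝ (Fin n) | ∀ ℓ ∈ L, ℓ x ≤ 1})
    (h : EuclideanSpace ℝ (Fin n) → ℝ)
    (hh : ∀ x, h x = L.sup' hL fun ℓ => ℓ x)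
    (f : MvPolynomial (Fin n) ℝ)
    (X : Set (EuclideanSpace ℝ (Fin n)))
    (hX : X = {x | MvPolynomial.eval (fun j => x j) f = 0})
    (v : EuclideanSpace ℝ (Fin n)) (hv : v ∈ X) (hgrad : grad f v ≠ 0)
    (u : EuclideanSpace ℝ (Fin n))
    (hu : ∀ x ∈ X, h (u - v) ≤ h (u - x))
    (lam : ℝ) (hlam : lam = h (u - v)) (hpos : 0 < lam) :
    grad f v ∈ Submodule.span ℝ
      (vecOf '' {ℓ : EuclideanSpace ℝ (Fin n) →ₗ[ℝ] ℝ | ℓ ∈ L ∧ ℓ (u - v) = lam}) := by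
  classical
  set g : EuclideanSpace ℝ (Fin n) := grad f v with hg
  set Fe : EuclideanSpace ℝ (Fin n) → ℝ := fun x => MvPolynomial.eval (fun j => x j) f with hFe
  set f' : EuclideanSpace ℝ (Fin n) →L[ℝ] ℝ :=
    ∑ i, MvPolynomial.eval (fun j => v j) (MvPolynomial.pderiv i f) •
      (EuclideanSpace.proj i : EuclideanSpace ℝ (Fin n) →L[ℝ] ℝ) with hf'def
  have hF : HasStrictFDerivAt Fe f' v := hasStrictFDerivAt_eval_poly f v
  have hf'inner : ∀ x, f' x = (inner ℝ g x : ℝ) := by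
    intro x
    rw [euclid_inner_eq g x]
    simp only [hf'def, ContinuousLinearMap.sum_apply, ContinuousLinearMap.smul_apply,
      smul_eq_mul]
    rfl
  have hrange : f'.range = ⊤ := by
    rw [LinearMap.range_eq_top]
    intro y
    have hgg : (inner ℝ g g : ℝ) ≠ 0 := inner_self_ne_zero.2 hgrad
    refine ⟨(y / (inner ℝ g g : ℝ)) • g, ?_⟩
    rw [map_smul, ContinuousLinearMap.coe_coe, hf'inner, smul_eq_mul, div_mul_cancel₀ _ hgg]
  have hFv : Fe v = 0 := by rw [hX] at hv; exact hv
  have hle : ∀ ℓ ∈ L, ℓ (u - v) ≤ lam := by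
    intro ℓ hℓ; rw [hlam, hh]; exact Finset.le_sup' (fun ℓ => ℓ (u - v)) hℓ
  -- Key step: first-order optimality along tangent directions
  have key : ∀ d : EuclideanSpace ℝ (Fin n), f' d = 0 →
      ∃ ℓ ∈ L, ℓ (u - v) = lam ∧ ℓ d ≤ 0 := by
    intro d hd
    by_contra hcon
    push_neg at hcon
    -- hcon : ∀ ℓ ∈ L, ℓ (u - v) = lam → 0 < ℓ d
    set d₀ : f'.ker := ⟨d, LinearMap.mem_ker.2 hd⟩ with hd₀def
    set ψ : f'.ker → EuclideanSpace ℝ (Fin n) :=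
      hF.implicitFunction Fe f' hrange 0 with hψdef
    have hψ0 : ψ 0 = v := by
      rw [hψdef, ← hFv]; exact hF.implicitFunction_apply_image hrange
    have hψd : HasStrictFDerivAt ψ (f'.ker).subtypeL 0 := by
      rw [hψdef, ← hFv]; exact hF.to_implicitFunction hrange
    have htend0 : Tendsto (fun t : ℝ => t • d₀) (𝓝 0) (𝓝 0) := by
      have this : Tendsto (fun t : ℝ => t • d₀) (𝓝 0) (𝓝 ((0 : ℝ) • d₀)) :=
        (continuous_id.smul (continuous_const (y := d₀))).tendsto (0 : ℝ)
      rw [zero_smul] at this; exact this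
    have hmem : ∀ᶠ t : ℝ in 𝓝 0, Fe (ψ (t • d₀)) = 0 := by
      have h1 := hF.map_implicitFunction_eq hrange
      rw [hFv] at h1
      have h2 : Tendsto (fun t : ℝ => ((0 : ℝ), t • d₀)) (𝓝 0)
          (𝓝 ((0 : ℝ), (0 : f'.ker))) := by
        rw [nhds_prod_eq]; exact tendsto_const_nhds.prodMk htend0
      exact h2.eventually h1
    have htendψ : Tendsto (fun t : ℝ => ψ (t • d₀)) (𝓝 0) (𝓝 v) := by
      have h1 : Tendsto ψ (𝓝 0) (𝓝 v) := by
        have := hψd.continuousAt.tendsto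
        rwa [hψ0] at this
      exact h1.comp htend0
    have ho : (fun t : ℝ => ψ (t • d₀) - v - t • d) =o[𝓝 (0 : ℝ)] fun t => t • d := by
      have h1 := hψd.isLittleO
      have h2 : Tendsto (fun t : ℝ => (t • d₀, (0 : f'.ker))) (𝓝 0) (𝓝 (0, 0)) := by
        rw [nhds_prod_eq]; exact htend0.prodMk tendsto_const_nhds
      have h3 := h1.comp_tendsto h2
      simp only [Function.comp_def, sub_zero, hψ0] at h3
      have h4 : (fun t : ℝ => ψ (t • d₀) - v - t • d) =o[𝓝 (0 : ℝ)]
          fun t : ℝ => (t • d₀ : f'.ker) := h3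
      exact h4.trans_isBigO (Asymptotics.isBigO_of_le _ fun t => le_of_eq rfl)
    have hallev : ∀ ℓ ∈ L, ∀ᶠ t : ℝ in 𝓝[>] 0, ℓ (u - ψ (t • d₀)) < lam := by
      intro ℓ hℓ
      set ℓc : EuclideanSpace ℝ (Fin n) →L[ℝ] ℝ := LinearMap.toContinuousLinearMap ℓ with hℓc
      have hℓapp : ∀ x, ℓ x = ℓc x := fun x => rfl
      by_cases hact : ℓ (u - v) = lam
      · -- active functional
        have hld : 0 < ℓ d := hcon ℓ hℓ hact
        set K : ℝ := ‖ℓc‖ with hK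
        have hKnn : 0 ≤ K := norm_nonneg _
        set ε : ℝ := ℓ d / (2 * (K * ‖d‖ + 1)) with hε
        have hden : 0 < K * ‖d‖ + 1 := by positivity
        have hεpos : 0 < ε := by
          apply div_pos hld; positivity
        have hev := ho.def hεpos
        filter_upwards [hev.filter_mono nhdsWithin_le_nhds, self_mem_nhdsWithin]
          with t hterr htpos
        have htpos' : (0 : ℝ) < t := htpos
        have hsplit : ℓ (u - ψ (t • d₀)) = lam - t * ℓ d - ℓ (ψ (t • d₀) - v - t • d) := by
          have hdecomp : u - ψ (t • d₀) = (u - v) - t • d - (ψ (t • d₀) - v - t • d) := by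
            abel
          rw [hdecomp, map_sub, map_sub, map_smul, hact, smul_eq_mul]
        have hnorm : ‖t • d‖ = t * ‖d‖ := by
          rw [norm_smul, Real.norm_eq_abs, abs_of_pos htpos']
        have hbound : |ℓ (ψ (t • d₀) - v - t • d)| ≤ K * (ε * (t * ‖d‖)) := by
          rw [hℓapp]
          calc |ℓc (ψ (t • d₀) - v - t • d)| ≤ K * ‖ψ (t • d₀) - v - t • d‖ :=
                ℓc.le_opNorm _
            _ ≤ K * (ε * (t * ‖d‖)) := by
                apply mul_le_mul_of_nonneg_left _ hKnn
                rw [← hnorm]; simpa using hterr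
        have hεK : K * ‖d‖ * ε ≤ ℓ d / 2 := by
          have h2 : ε * (2 * (K * ‖d‖ + 1)) = ℓ d := div_mul_cancel₀ _ (by positivity)
          nlinarith [mul_nonneg hKnn (norm_nonneg d), hεpos]
        have h1 := (abs_le.1 hbound).1
        rw [hsplit]
        nlinarith [mul_pos htpos' hld, mul_nonneg hKnn (norm_nonneg d)]
      · -- inactive functional
        have hlt : ℓ (u - v) < lam := lt_of_le_of_ne (hle ℓ hℓ) hact
        have htl : Tendsto (fun t : ℝ => ℓc (u - ψ (t • d₀))) (𝓝 0) (𝓝 (ℓc (u - v))) :=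
          (ℓc.continuous.tendsto _).comp (tendsto_const_nhds.sub htendψ)
        have := htl.eventually_lt_const (by rw [← hℓapp]; exact hlt)
        exact (this.filter_mono nhdsWithin_le_nhds).mono fun t ht => by
          rw [hℓapp]; exact ht
    have hallev' : ∀ᶠ t : ℝ in 𝓝[>] 0, ∀ ℓ ∈ L, ℓ (u - ψ (t • d₀)) < lam :=
      (Filter.eventually_all_finset L).2 hallev
    have hmemX : ∀ᶠ t : ℝ in 𝓝[>] 0, ψ (t • d₀) ∈ X := by
      refine (hmem.filter_mono nhdsWithin_le_nhds).mono fun t ht => ?_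
      rw [hX]; exact ht
    obtain ⟨t, hxt, hltall⟩ := (hmemX.and hallev').exists
    have hmin := hu _ hxt
    rw [← hlam, hh] at hmin
    have hs : (L.sup' hL fun ℓ => ℓ (u - ψ (t • d₀))) < lam :=
      (Finset.sup'_lt_iff hL).2 hltall
    linarith
  -- Separation argument
  set T : Submodule ℝ (EuclideanSpace ℝ (Fin n)) := (ℝ ∙ g)ᗮ with hT
  have key2 : ∀ dd ∈ T, ∃ ℓ ∈ L, ℓ (u - v) = lam ∧ ℓ dd ≤ 0 := by
    intro dd hdd
    apply key
    rw [hf'inner]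
    exact Submodule.mem_orthogonal_singleton_iff_inner_right.1 hdd
  set Y : Set (EuclideanSpace ℝ (Fin n)) :=
    vecOf '' {ℓ : EuclideanSpace ℝ (Fin n) →ₗ[ℝ] ℝ | ℓ ∈ L ∧ ℓ (u - v) = lam} with hY
  have hYfin : Y.Finite :=
    (L.finite_toSet.subset (fun ℓ hℓ => hℓ.1)).image _
  set Q : EuclideanSpace ℝ (Fin n) →L[ℝ] EuclideanSpace ℝ (Fin n) :=
    T.subtypeL.comp T.orthogonalProjectionOnto with hQdef
  have hQT : ∀ z, Q z ∈ T := fun z => (T.orthogonalProjectionOnto z).2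
  have hQadj : ∀ a b, (inner ℝ (Q a) b : ℝ) = (inner ℝ a (Q b) : ℝ) := fun a b =>
    Submodule.inner_starProjection_left_eq_right T a b
  have h0 : (0 : EuclideanSpace ℝ (Fin n)) ∈ convexHull ℝ (Q '' Y) := by
    by_contra h0
    obtain ⟨φ, c, hc1, hc2⟩ := geometric_hahn_banach_point_closed
      (convex_convexHull ℝ _) ((hYfin.image _).isClosed_convexHull ℝ) h0
    set w := (InnerProductSpace.toDual ℝ (EuclideanSpace ℝ (Fin n))).symm φ with hw
    obtain ⟨ℓ, hℓL, hℓlam, hℓle⟩ := key2 (Q w) (hQT w)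
    have h1 : ℓ (Q w) = (inner ℝ (vecOf ℓ) (Q w) : ℝ) := apply_eq_inner_vecOf ℓ _
    have h2 : (inner ℝ (vecOf ℓ) (Q w) : ℝ) = (inner ℝ (Q (vecOf ℓ)) w : ℝ) := (hQadj _ _).symm
    have h3 : (inner ℝ (Q (vecOf ℓ)) w : ℝ) = φ (Q (vecOf ℓ)) := by
      rw [real_inner_comm, hw]
      exact InnerProductSpace.toDual_symm_apply
    have h4 : c < φ (Q (vecOf ℓ)) :=
      hc2 _ (subset_convexHull ℝ _ ⟨vecOf ℓ, ⟨ℓ, ⟨hℓL, hℓlam⟩, rfl⟩, rfl⟩)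
    have h5 : (0 : ℝ) < c := by simpa using hc1
    rw [h1, h2, h3] at hℓle
    linarith
  have himg : Q '' Y = (Q : EuclideanSpace ℝ (Fin n) →ₗ[ℝ] EuclideanSpace ℝ (Fin n)) '' Y := rfl
  rw [himg, ← LinearMap.image_convexHull] at h0
  obtain ⟨z, hz, hQz⟩ := h0
  have hzortho : z ∈ Tᗮ := by
    have hP0 : T.orthogonalProjectionOnto z = 0 := by
      have : ((T.orthogonalProjectionOnto z : T) : EuclideanSpace ℝ (Fin n)) = 0 := hQz
      exact_mod_cast this
    exact Submodule.orthogonalProjectionOnto_eq_zero_iff.1 hP0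
  rw [hT, Submodule.orthogonal_orthogonal] at hzortho
  obtain ⟨c, hc⟩ := Submodule.mem_span_singleton.1 hzortho
  have hzval : (inner ℝ z (u - v) : ℝ) = lam := by
    have hlin : IsLinearMap ℝ (fun w : EuclideanSpace ℝ (Fin n) => (inner ℝ w (u - v) : ℝ)) :=
      ⟨fun a b => inner_add_left a b _, fun r a => real_inner_smul_left a _ r⟩
    have hconv : Convex ℝ {w : EuclideanSpace ℝ (Fin n) | (inner ℝ w (u - v) : ℝ) = lam} :=
      convex_hyperplane hlin lam
    refine convexHull_min ?_ hconv hz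
    rintro y ⟨ℓ, ⟨hℓL, hℓlam⟩, rfl⟩
    show (inner ℝ (vecOf ℓ) (u - v) : ℝ) = lam
    rw [← apply_eq_inner_vecOf]
    exact hℓlam
  have hzspan : z ∈ Submodule.span ℝ Y :=
    convexHull_min Submodule.subset_span (Submodule.span ℝ Y).convex hz
  have hcne : c ≠ 0 := by
    rintro rfl
    rw [zero_smul] at hc
    rw [← hc, inner_zero_left] at hzval
    linarith
  have hgz : g = c⁻¹ • z := by
    rw [← hc, smul_smul, inv_mul_cancel₀ hcne, one_smul]
  rw [hg] at hgz ⊢  -- ?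
  rw [hgz]
  exact Submodule.smul_mem _ _ hzspan
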